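/- For positive semidefinite matrices $A, B, C \in \mathbb{C}^{d \times d}$ with $\mathrm{Tr}(C) = 1$, the fidelity difference satisfies $\left| \|\sqrt{A}\sqrt{C}\|_1 - \|\sqrt{B}\sqrt{C}\|_1 \right| \le \sqrt{\mathrm{Tr}((\sqrt{A} - \sqrt{B})^2)}$. -/

import Mathlib

open Matrix ComplexOrder

/-- The positive semidefinite square root of a positive semidefinite matrix -/
noncomputable def Matrix.PosSemidef.sqrt {n : Type*} [Fintype n] [DecidableEq n] {𝕜 : Type*}
    [RCLike 𝕜] {A : Matrix n n 𝕜} (hA : A.PosSemidef) : Matrix n n 𝕜 :=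
  hA.1.eigenvectorUnitary.1 * diagonal ((↑) ∘ (√·) ∘ hA.1.eigenvalues) *
  (star hA.1.eigenvectorUnitary : Matrix n n 𝕜)

namespace TNAux
variable {d : ℕ}

variable {d : ℕ}

noncomputable def fc {N : Matrix (Fin d) (Fin d) ℂ} (hN : N.IsHermitian) (f : ℝ → ℝ) :
    Matrix (Fin d) (Fin d) ℂ :=
  (hN.eigenvectorUnitary : Matrix (Fin d) (Fin d) ℂ) *
    diagonal (Complex.ofReal ∘ f ∘ hN.eigenvalues) *
    (star hN.eigenvectorUnitary : Matrix (Fin d) (Fin d) ℂ)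

variable {N : Matrix (Fin d) (Fin d) ℂ} (hN : N.IsHermitian) (f g : ℝ → ℝ)

lemma dcongr (h : ∀ x, f x = g x) :
    diagonal (Complex.ofReal ∘ f ∘ hN.eigenvalues) = diagonal (Complex.ofReal ∘ g ∘ hN.eigenvalues) := by
  exact congrArg diagonal (funext fun i => congrArg Complex.ofReal (h _))

lemma fc_mul_fc : fc hN f * fc hN g = fc hN (f * g) := by
  unfold fc
  have h1 : (star hN.eigenvectorUnitary : Matrix (Fin d) (Fin d) ℂ) *
      (hN.eigenvectorUnitary : Matrix (Fin d) (Fin d) ℂ) = 1 :=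
    Matrix.mem_unitaryGroup_iff'.mp hN.eigenvectorUnitary.2
  rw [mul_assoc, mul_assoc, ← mul_assoc (star hN.eigenvectorUnitary : Matrix (Fin d) (Fin d) ℂ),
    ← mul_assoc (star hN.eigenvectorUnitary : Matrix (Fin d) (Fin d) ℂ), h1, one_mul,
    ← mul_assoc, ← mul_assoc, mul_assoc _ _ (diagonal _), diagonal_mul_diagonal]
  have hd : (diagonal fun i => (Complex.ofReal ∘ f ∘ hN.eigenvalues) i * (Complex.ofReal ∘ g ∘ hN.eigenvalues) i)
      = diagonal (Complex.ofReal ∘ (f * g) ∘ hN.eigenvalues) :=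
    congrArg diagonal (funext fun i => by simp [Function.comp, Complex.ofReal_mul])
  rw [hd]

lemma fc_congr (h : ∀ x, f x = g x) : fc hN f = fc hN g := by
  unfold fc; rw [dcongr hN f g h]

lemma fc_id : fc hN id = N := (hN.spectral_theorem).symm

lemma fc_one : fc hN (fun _ => 1) = 1 := by
  unfold fc
  have h1 : (hN.eigenvectorUnitary : Matrix (Fin d) (Fin d) ℂ) *
      (star hN.eigenvectorUnitary : Matrix (Fin d) (Fin d) ℂ) = 1 :=
    Matrix.mem_unitaryGroup_iff.mp hN.eigenvectorUnitary.2
  have h2 : diagonal (Complex.ofReal ∘ (fun _ : ℝ => (1:ℝ)) ∘ hN.eigenvalues)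
      = (1 : Matrix (Fin d) (Fin d) ℂ) := by
    have : (Complex.ofReal ∘ (fun _ : ℝ => (1:ℝ)) ∘ hN.eigenvalues) = fun _ => (1:ℂ) := by
      funext i; simp
    rw [this]; exact diagonal_one
  rw [h2, mul_one, h1]

lemma fc_conjTranspose : (fc hN f)ᴴ = fc hN f := by
  unfold fc
  rw [conjTranspose_mul, conjTranspose_mul, diagonal_conjTranspose, ← mul_assoc]
  have hs : star (Complex.ofReal ∘ f ∘ hN.eigenvalues) = Complex.ofReal ∘ f ∘ hN.eigenvalues := by
    funext i; simp [Function.comp, Complex.conj_ofReal]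
  rw [hs]
  simp only [← star_eq_conjTranspose, star_star]

lemma fc_posSemidef (hf : ∀ x, 0 ≤ f x) : (fc hN f).PosSemidef := by
  unfold fc
  exact PosSemidef.mul_mul_conjTranspose_same
    (posSemidef_diagonal_iff.mpr fun i => by
      simp only [Function.comp]
      exact Complex.zero_le_real.mpr (hf _)) _

lemma fc_sub : fc hN f - fc hN g = fc hN (f - g) := by
  unfold fc
  rw [← sub_mul, ← mul_sub, diagonal_sub]
  have hd : (diagonal fun i => (Complex.ofReal ∘ f ∘ hN.eigenvalues) i - (Complex.ofReal ∘ g ∘ hN.eigenvalues) i)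
      = diagonal (Complex.ofReal ∘ (f - g) ∘ hN.eigenvalues) :=
    congrArg diagonal (funext fun i => by simp [Function.comp, Complex.ofReal_sub])
  rw [hd]

lemma sqrt_eq_fc {X : Matrix (Fin d) (Fin d) ℂ} (hX : X.PosSemidef) :
    hX.sqrt = fc hX.1 Real.sqrt := rfl

theorem _root_.Matrix.PosSemidef.posSemidef_sqrt {X : Matrix (Fin d) (Fin d) ℂ}
    (hX : X.PosSemidef) : hX.sqrt.PosSemidef := by
  rw [sqrt_eq_fc]; exact fc_posSemidef _ _ Real.sqrt_nonneg

theorem _root_.Matrix.PosSemidef.sqrt_mul_self {X : Matrix (Fin d) (Fin d) ℂ}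
    (hX : X.PosSemidef) : hX.sqrt * hX.sqrt = X := by
  rw [sqrt_eq_fc, fc_mul_fc]
  conv_rhs => rw [← fc_id hX.1]
  unfold fc
  rw [show (Complex.ofReal ∘ (Real.sqrt * Real.sqrt) ∘ hX.1.eigenvalues)
      = Complex.ofReal ∘ id ∘ hX.1.eigenvalues from funext fun i => by
    simp [Real.mul_self_sqrt (hX.eigenvalues_nonneg i)]]


variable {d : ℕ}

lemma trace_re_nonneg {Z : Matrix (Fin d) (Fin d) ℂ} (hZ : Z.PosSemidef) :
    0 ≤ Z.trace.re := by
  rw [Matrix.trace, Complex.re_sum]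
  apply Finset.sum_nonneg
  intro i _
  have := hZ.re_dotProduct_nonneg (Pi.single i 1)
  simpa [dotProduct, Matrix.mulVec, Pi.single_apply, Finset.sum_ite_eq,
    Matrix.diag] using this

lemma sandwich_tr_nonneg {Q : Matrix (Fin d) (Fin d) ℂ} (hQ : Q.PosSemidef)
    (R : Matrix (Fin d) (Fin d) ℂ) : 0 ≤ ((Rᴴ * Q * R).trace).re :=
  trace_re_nonneg (hQ.conjTranspose_mul_mul_same R)

lemma trace_conjTranspose_mul (G H : Matrix (Fin d) (Fin d) ℂ) :
    (Gᴴ * H).trace = ∑ p : Fin d × Fin d, (starRingEnd ℂ) (G p.1 p.2) * H p.1 p.2 := by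
  rw [Matrix.trace, Fintype.sum_prod_type]
  simp only [Matrix.diag, Matrix.mul_apply, Matrix.conjTranspose_apply]
  rw [Finset.sum_comm]
  simp [Complex.star_def]

lemma cs (G H : Matrix (Fin d) (Fin d) ℂ) :
    ((Gᴴ * H).trace).re ≤ Real.sqrt ((Gᴴ * G).trace.re) * Real.sqrt ((Hᴴ * H).trace.re) := by
  let x : EuclideanSpace ℂ (Fin d × Fin d) := WithLp.toLp 2 (fun p : Fin d × Fin d => G p.1 p.2)
  let y : EuclideanSpace ℂ (Fin d × Fin d) := WithLp.toLp 2 (fun p : Fin d × Fin d => H p.1 p.2)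
  have hinner : (Gᴴ * H).trace = inner (𝕜 := ℂ) x y := by
    rw [trace_conjTranspose_mul]
    simp [PiLp.inner_apply, RCLike.inner_apply, x, y, mul_comm]
  have hG : (Gᴴ * G).trace.re = ‖x‖ ^ 2 := by
    rw [trace_conjTranspose_mul, ← inner_self_eq_norm_sq (𝕜 := ℂ)]
    simp [PiLp.inner_apply, RCLike.inner_apply, x, -inner_self_eq_norm_sq_to_K]
  have hH : (Hᴴ * H).trace.re = ‖y‖ ^ 2 := by
    rw [trace_conjTranspose_mul, ← inner_self_eq_norm_sq (𝕜 := ℂ)]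
    simp [PiLp.inner_apply, RCLike.inner_apply, y, -inner_self_eq_norm_sq_to_K]
  rw [hinner, hG, hH, Real.sqrt_sq (norm_nonneg _), Real.sqrt_sq (norm_nonneg _)]
  calc (inner (𝕜 := ℂ) x y).re ≤ ‖(inner (𝕜 := ℂ) x y : ℂ)‖ := Complex.re_le_norm _
    _ ≤ ‖x‖ * ‖y‖ := norm_inner_le_norm x y

lemma fc_zero : fc hN (fun _ => 0) = 0 := by
  unfold fc
  have : diagonal (Complex.ofReal ∘ (fun _ : ℝ => (0:ℝ)) ∘ hN.eigenvalues)
      = (0 : Matrix (Fin d) (Fin d) ℂ) := by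
    have : (Complex.ofReal ∘ (fun _ : ℝ => (0:ℝ)) ∘ hN.eigenvalues) = fun _ => (0:ℂ) := by
      funext i; simp
    rw [this, diagonal_zero]
  rw [this, mul_zero, zero_mul]

lemma polar (X : Matrix (Fin d) (Fin d) ℂ) :
    ∃ V : Matrix (Fin d) (Fin d) ℂ,
      V * (posSemidef_conjTranspose_mul_self X).sqrt = X ∧
      (1 - Vᴴ * V).PosSemidef ∧
      Vᴴ * X = (posSemidef_conjTranspose_mul_self X).sqrt := by
  set hT := posSemidef_conjTranspose_mul_self X with hTdef
  set N := hT.sqrt with hNdef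
  have hNpsd : N.PosSemidef := hT.posSemidef_sqrt
  have hN : N.IsHermitian := hNpsd.1
  have hNN : N * N = Xᴴ * X := hT.sqrt_mul_self
  set inv' : ℝ → ℝ := fun x => x⁻¹ with hinv
  set ind : ℝ → ℝ := fun x => if x = 0 then 0 else 1 with hind
  set Ninv := fc hN inv' with hNinvdef
  set P := fc hN ind with hPdef
  have hfcid : fc hN id = N := fc_id hN
  have hNinvH : Ninvᴴ = Ninv := fc_conjTranspose hN inv'
  have hPH : Pᴴ = P := fc_conjTranspose hN ind
  -- pointwise identities
  have hIdInv : ∀ x : ℝ, inv' x * x = ind x := by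
    intro x
    by_cases h : x = 0 <;> simp [hinv, hind, h, inv_mul_cancel₀]
  have hInvN : Ninv * N = P := by
    have h := fc_mul_fc hN inv' id
    rw [hfcid] at h
    exact h.trans (fc_congr hN _ _ hIdInv)
  have hNInv : N * Ninv = P := by
    have h := fc_mul_fc hN id inv'
    rw [hfcid] at h
    exact h.trans (fc_congr hN _ _ (fun x => by
      by_cases h : x = 0 <;> simp [hinv, hind, h, mul_inv_cancel₀]))
  have hPP : P * P = P := by
    rw [hPdef, fc_mul_fc]
    exact fc_congr hN _ _ (fun x => by by_cases h : x = 0 <;> simp [hind, h])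
  have h1P : (1 - P).PosSemidef := by
    rw [hPdef, ← fc_one hN, fc_sub]
    exact fc_posSemidef hN _ (fun x => by by_cases h : x = 0 <;> simp [hind, h])
  have hPN : P * N = N := by
    have h := fc_mul_fc hN ind id
    rw [hfcid] at h
    refine h.trans ?_
    refine (fc_congr hN _ _ (fun x => by by_cases h : x = 0 <;> simp [hind, h])).trans hfcid
  have hNP : N * P = N := by
    have h := fc_mul_fc hN id ind
    rw [hfcid] at h
    refine h.trans ?_
    refine (fc_congr hN _ _ (fun x => by by_cases h : x = 0 <;> simp [hind, h])).trans hfcid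
  -- X * P = X
  have hXP : X * P = X := by
    have hz : (X * (1 - P))ᴴ * (X * (1 - P)) = 0 := by
      have h1Ph : (1 - P)ᴴ = 1 - P := by
        rw [conjTranspose_sub, conjTranspose_one, hPH]
      rw [conjTranspose_mul, h1Ph, mul_assoc, ← mul_assoc Xᴴ X, ← hNN,
        ← mul_assoc (1 - P), ← mul_assoc (1 - P)]
      have e1 : (1 - P) * N = N - N := by
        rw [sub_mul, one_mul, hPN, sub_self]
      rw [e1, sub_self, zero_mul, zero_mul]
    have := Matrix.conjTranspose_mul_self_eq_zero.mp hz
    have h2 : X * 1 - X * P = 0 := by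
      rw [← mul_sub]; exact this
    rw [mul_one] at h2
    exact (sub_eq_zero.mp h2).symm
  refine ⟨X * Ninv, ?_, ?_, ?_⟩
  · rw [mul_assoc, hInvN, hXP]
  · have hVV : (X * Ninv)ᴴ * (X * Ninv) = P := by
      rw [conjTranspose_mul, hNinvH]
      rw [mul_assoc, ← mul_assoc Xᴴ X Ninv, ← hNN]
      rw [mul_assoc N N Ninv, hNInv, hNP, hInvN]
    rw [hVV]; exact h1P
  · rw [conjTranspose_mul, hNinvH, mul_assoc, ← hNN, ← mul_assoc, hInvN, hPN]

lemma contraction_bound (V R : Matrix (Fin d) (Fin d) ℂ) (hV : (1 - Vᴴ * V).PosSemidef) :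
    (((V * R)ᴴ * (V * R)).trace).re ≤ ((Rᴴ * R).trace).re := by
  have key : (Rᴴ * R) - ((V * R)ᴴ * (V * R)) = Rᴴ * (1 - Vᴴ * V) * R := by
    rw [conjTranspose_mul, mul_sub, mul_one, sub_mul]
    simp only [mul_assoc]
  have h0 : 0 ≤ ((Rᴴ * (1 - Vᴴ * V) * R).trace).re := sandwich_tr_nonneg hV R
  have h1 : ((Rᴴ * R).trace).re - (((V * R)ᴴ * (V * R)).trace).re
      = ((Rᴴ * (1 - Vᴴ * V) * R).trace).re := by
    rw [← key, trace_sub, Complex.sub_re]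
  linarith

end TNAux
/-- The trace norm `‖X‖₁ = Tr √(Xᴴ X)` of a complex matrix (a real number, since the trace
of a positive semidefinite matrix is real). -/
noncomputable def traceNorm {d : ℕ} (X : Matrix (Fin d) (Fin d) ℂ) : ℝ :=
  ((Matrix.posSemidef_conjTranspose_mul_self X).sqrt.trace).re




open TNAux in
lemma oneSide {d : ℕ} (M₁ M₂ S : Matrix (Fin d) (Fin d) ℂ)
    (hS : Sᴴ = S) (hTrS : ((Sᴴ * S).trace).re ≤ 1) :
    traceNorm (M₁ * S) - traceNorm (M₂ * S)
      ≤ Real.sqrt ((((M₁ - M₂)ᴴ * (M₁ - M₂)).trace).re) := by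
  obtain ⟨V, hV1, hVc, hV2⟩ := polar (M₁ * S)
  obtain ⟨W, hW1, hWc, hW2⟩ := polar (M₂ * S)
  set NX := (posSemidef_conjTranspose_mul_self (M₁ * S)).sqrt with hNX
  set NY := (posSemidef_conjTranspose_mul_self (M₂ * S)).sqrt with hNY
  have htnX : traceNorm (M₁ * S) = NX.trace.re := rfl
  have htnY : traceNorm (M₂ * S) = NY.trace.re := rfl
  obtain ⟨R, hRR, hRH⟩ : ∃ R : Matrix (Fin d) (Fin d) ℂ, R * R = NY ∧ Rᴴ = R := by
    have hNYpsd := (posSemidef_conjTranspose_mul_self (M₂ * S)).posSemidef_sqrt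
    exact ⟨hNYpsd.sqrt, hNYpsd.sqrt_mul_self, hNYpsd.posSemidef_sqrt.1⟩
  clear_value NX NY
  set M := M₁ - M₂ with hM
  -- Step D : Re Tr(Vᴴ Y) ≤ Tr NY
  have hRtr : ((Rᴴ * R).trace).re = NY.trace.re := by rw [hRH, hRR]
  have hRtr0 : 0 ≤ ((Rᴴ * R).trace).re := trace_re_nonneg (posSemidef_conjTranspose_mul_self R)
  have stepD : ((Vᴴ * (M₂ * S)).trace).re ≤ NY.trace.re := by
    have e1 : Vᴴ * (M₂ * S) = (Vᴴ * W * R) * R := by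
      rw [← hW1, ← hRR]; simp only [mul_assoc]
    have e2 : ((Vᴴ * (M₂ * S)).trace) = (((V * R)ᴴ * (W * R)).trace) := by
      rw [e1, trace_mul_comm, conjTranspose_mul, hRH]
      congr 1
      simp only [mul_assoc]
    have hb := cs (V * R) (W * R)
    have c1 : (((V * R)ᴴ * (V * R)).trace).re ≤ ((Rᴴ * R).trace).re :=
      contraction_bound V R hVc
    have c2 : (((W * R)ᴴ * (W * R)).trace).re ≤ ((Rᴴ * R).trace).re :=
      contraction_bound W R hWc
    calc ((Vᴴ * (M₂ * S)).trace).re = (((V * R)ᴴ * (W * R)).trace).re := by rw [e2]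
      _ ≤ Real.sqrt ((((V * R)ᴴ * (V * R)).trace).re) *
            Real.sqrt ((((W * R)ᴴ * (W * R)).trace).re) := hb
      _ ≤ Real.sqrt (((Rᴴ * R).trace).re) * Real.sqrt (((Rᴴ * R).trace).re) := by
          exact mul_le_mul (Real.sqrt_le_sqrt c1) (Real.sqrt_le_sqrt c2)
            (Real.sqrt_nonneg _) (Real.sqrt_nonneg _)
      _ = ((Rᴴ * R).trace).re := Real.mul_self_sqrt hRtr0
      _ = NY.trace.re := hRtr
  -- Step C : Re Tr(Vᴴ (X - Y)) ≤ √Tr(MᴴM)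
  have stepC : ((Vᴴ * (M * S)).trace).re ≤ Real.sqrt (((Mᴴ * M).trace).re) := by
    have e3 : (Vᴴ * (M * S)).trace = ((V * S)ᴴ * M).trace := by
      calc (Vᴴ * (M * S)).trace = ((Vᴴ * M) * S).trace := by rw [← mul_assoc]
        _ = (S * (Vᴴ * M)).trace := trace_mul_comm _ _
        _ = ((V * S)ᴴ * M).trace := by rw [conjTranspose_mul, hS, mul_assoc]
    have hb := cs (V * S) M
    have c1 : (((V * S)ᴴ * (V * S)).trace).re ≤ ((Sᴴ * S).trace).re :=
      contraction_bound V S hVc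
    have c3 : Real.sqrt ((((V * S)ᴴ * (V * S)).trace).re) ≤ 1 := by
      calc Real.sqrt ((((V * S)ᴴ * (V * S)).trace).re)
          ≤ Real.sqrt (((Sᴴ * S).trace).re) := Real.sqrt_le_sqrt c1
        _ ≤ Real.sqrt 1 := Real.sqrt_le_sqrt hTrS
        _ = 1 := Real.sqrt_one
    calc ((Vᴴ * (M * S)).trace).re = (((V * S)ᴴ * M).trace).re := by rw [e3]
      _ ≤ Real.sqrt ((((V * S)ᴴ * (V * S)).trace).re) * Real.sqrt (((Mᴴ * M).trace).re) := hb
      _ ≤ Real.sqrt (((Mᴴ * M).trace).re) :=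
          mul_le_of_le_one_left (Real.sqrt_nonneg _) c3
  -- Step A+B
  have split : ((Vᴴ * (M₁ * S)).trace).re
      = ((Vᴴ * (M₂ * S)).trace).re + ((Vᴴ * (M * S)).trace).re := by
    have : Vᴴ * (M₁ * S) = Vᴴ * (M₂ * S) + Vᴴ * (M * S) := by
      rw [hM, ← mul_add, sub_mul]
      congr 1
      abel
    rw [this, trace_add, Complex.add_re]
  have hVX : ((Vᴴ * (M₁ * S)).trace).re = NX.trace.re := by rw [hV2]
  rw [htnX, htnY, ← hVX, split]
  linarith


/-- For PSD matrices `A, B, C` with `Tr C = 1`,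
`| ‖√A √C‖₁ - ‖√B √C‖₁ | ≤ √(Tr((√A - √B)²))`. -/
theorem fidelity_diff_bound (d : ℕ) (A B C : Matrix (Fin d) (Fin d) ℂ)
    (hA : A.PosSemidef) (hB : B.PosSemidef) (hC : C.PosSemidef) (hCtr : C.trace = 1) :
    |traceNorm (hA.sqrt * hC.sqrt) - traceNorm (hB.sqrt * hC.sqrt)|
      ≤ Real.sqrt ((((hA.sqrt - hB.sqrt) ^ 2).trace).re) := by
  have hS : hC.sqrtᴴ = hC.sqrt := hC.posSemidef_sqrt.1
  have hTrS : ((hC.sqrtᴴ * hC.sqrt).trace).re ≤ 1 := by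
    rw [hS, hC.sqrt_mul_self, hCtr]
    simp
  have hMH : (hA.sqrt - hB.sqrt)ᴴ = hA.sqrt - hB.sqrt := by
    rw [conjTranspose_sub, hA.posSemidef_sqrt.1, hB.posSemidef_sqrt.1]
  have hsq : (hA.sqrt - hB.sqrt)ᴴ * (hA.sqrt - hB.sqrt) = (hA.sqrt - hB.sqrt) ^ 2 := by
    rw [hMH, pow_two]
  have hsq' : (hB.sqrt - hA.sqrt)ᴴ * (hB.sqrt - hA.sqrt) = (hA.sqrt - hB.sqrt) ^ 2 := by
    have h1 : hB.sqrt - hA.sqrt = -(hA.sqrt - hB.sqrt) := (neg_sub _ _).symm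
    rw [h1, conjTranspose_neg, neg_mul_neg, hsq]
  rw [abs_sub_le_iff]
  constructor
  · have := oneSide hA.sqrt hB.sqrt hC.sqrt hS hTrS
    rwa [hsq] at this
  · have := oneSide hB.sqrt hA.sqrt hC.sqrt hS hTrS
    rwa [hsq'] at this
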